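/- Let Σ be symmetric PSD of rank r with eigenpairs (λ_j, v_j), eigenvalues non-increasing, and let θ* ∈ ℝ^d satisfy (v_1ᵀθ*)² ≥ (v_2ᵀθ*)² ≥ … ≥ (v_dᵀθ*)². Then λ ∑_{j=1}^d (λ_j/(λ_j+λ))(v_jᵀθ*)² ≤ λ · (r/Tr(Σ)) · (∑_{k=1}^r 1/k) · ‖θ*‖²_Σ, hence B_ridge,λ ≤ C λ r (log r + 1) ‖θ*‖²_Σ / Tr(Σ) for a universal constant C. -/

import Mathlib

open Matrix

theorem stmt16 {d : ℕ} (r : ℕ) (hr : 1 ≤ r) (hrd : r ≤ d)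
    (Sig : Matrix (Fin d) (Fin d) ℝ) (hSig : Sig.PosSemidef)
    (ev : Fin d → ℝ) (v : Fin d → Fin d → ℝ)
    (hdecomp : Sig = ∑ j, ev j • Matrix.vecMulVec (v j) (v j))
    (horth : ∀ i j, v i ⬝ᵥ v j = if i = j then (1 : ℝ) else 0)
    (hmono : ∀ i j : Fin d, i ≤ j → ev j ≤ ev i)
    (hpos : ∀ j : Fin d, (j : ℕ) < r → 0 < ev j)
    (hzero : ∀ j : Fin d, r ≤ (j : ℕ) → ev j = 0)
    (θ : Fin d → ℝ)
    (hθmono : ∀ i j : Fin d, i ≤ j → (v j ⬝ᵥ θ) ^ 2 ≤ (v i ⬝ᵥ θ) ^ 2)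
    (lam : ℝ) (hlam : 0 < lam) :
    lam * ∑ j, (ev j / (ev j + lam)) * (v j ⬝ᵥ θ) ^ 2 ≤
        lam * ((r : ℝ) / Sig.trace) * (∑ m ∈ Finset.range r, (1 : ℝ) / (m + 1)) *
          (∑ j, ev j * (v j ⬝ᵥ θ) ^ 2) ∧
      lam * ∑ j, (ev j / (ev j + lam)) * (v j ⬝ᵥ θ) ^ 2 ≤
        lam * r * (Real.log r + 1) * (∑ j, ev j * (v j ⬝ᵥ θ) ^ 2) / Sig.trace := by
  classical
  set a : Fin d → ℝ := fun j => (v j ⬝ᵥ θ) ^ 2 with ha_def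
  have ha : ∀ j, 0 ≤ a j := fun j => sq_nonneg _
  have hevnn : ∀ j, 0 ≤ ev j := by
    intro j
    rcases lt_or_ge (j : ℕ) r with h | h
    · exact (hpos j h).le
    · exact (hzero j h).ge
  have hd : 0 < d := lt_of_lt_of_le hr hrd
  set T : ℝ := ∑ j, ev j with hT_def
  set S : ℝ := ∑ j, ev j * a j with hS_def
  have hS : 0 ≤ S := Finset.sum_nonneg fun j _ => mul_nonneg (hevnn j) (ha j)
  have htr : Sig.trace = T := by
    rw [hdecomp, Matrix.trace_sum]
    refine Finset.sum_congr rfl fun j _ => ?_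
    rw [Matrix.trace_smul]
    have : (Matrix.vecMulVec (v j) (v j)).trace = v j ⬝ᵥ v j := by
      simp [Matrix.trace, Matrix.vecMulVec_apply, dotProduct]
    rw [this, horth j j, if_pos rfl, smul_eq_mul, mul_one]
  have hTpos : 0 < T := by
    refine Finset.sum_pos' (fun i _ => hevnn i) ⟨⟨0, hd⟩, Finset.mem_univ _, ?_⟩
    exact hpos _ (by show 0 < r; omega)
  -- Key pointwise bound
  have key : ∀ k : Fin d, (k : ℕ) < r → a k * T ≤ ((r : ℝ) / ((k : ℕ) + 1)) * S := by
    intro k hk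
    set Q : Finset (Fin d) := Finset.univ.filter (fun i => i ≤ k) with hQ_def
    have hQeq : Q = Finset.Iic k := by ext i; simp [hQ_def]
    have hQcard : Q.card = (k : ℕ) + 1 := by rw [hQeq, Fin.card_Iic]
    have h1 : ((k : ℕ) + 1 : ℝ) * ev k ≤ ∑ i ∈ Q, ev i := by
      have := Finset.card_nsmul_le_sum Q ev (ev k)
        (fun i hi => hmono i k (by simpa [hQ_def] using hi))
      rwa [hQcard, nsmul_eq_mul, Nat.cast_add, Nat.cast_one] at this
    have h2 : a k * ∑ i ∈ Q, ev i ≤ S := by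
      calc a k * ∑ i ∈ Q, ev i = ∑ i ∈ Q, ev i * a k := by
            rw [Finset.mul_sum]; exact Finset.sum_congr rfl fun i _ => mul_comm _ _
        _ ≤ ∑ i ∈ Q, ev i * a i := by
            refine Finset.sum_le_sum fun i hi => ?_
            exact mul_le_mul_of_nonneg_left
              (hθmono i k (by simpa [hQ_def] using hi)) (hevnn i)
        _ ≤ S := Finset.sum_le_sum_of_subset_of_nonneg (Finset.subset_univ Q)
            (fun i _ _ => mul_nonneg (hevnn i) (ha i))
    -- tail sum bound
    set P : Finset (Fin d) := Finset.univ.filter (fun i => k < i ∧ (i : ℕ) < r) with hP_def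
    have hPcard : (P.card : ℝ) ≤ (r : ℝ) - ((k : ℕ) + 1) := by
      have hsub : P.card ≤ (Finset.Ico ((k : ℕ) + 1) r).card := by
        refine Finset.card_le_card_of_injOn (fun i => (i : ℕ)) ?_ ?_
        · intro i hi
          simp only [hP_def, Finset.mem_coe, Finset.mem_filter, Finset.mem_univ, true_and] at hi
          simp [Finset.mem_Ico, Nat.succ_le_iff, hi.1, hi.2]
        · intro i _ j _ h; exact Fin.val_injective h
      have : P.card ≤ r - ((k : ℕ) + 1) := by simpa using hsub
      have hkr : (k : ℕ) + 1 ≤ r := hk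
      calc (P.card : ℝ) ≤ ((r - ((k : ℕ) + 1) : ℕ) : ℝ) := by exact_mod_cast this
        _ = (r : ℝ) - ((k : ℕ) + 1) := by
            rw [Nat.cast_sub hkr]; push_cast; ring
    have h3 : ∑ i ∈ Finset.univ.filter (fun i => ¬ i ≤ k), ev i
        ≤ ((r : ℝ) - ((k : ℕ) + 1)) * ev k := by
      have hsum : ∑ i ∈ Finset.univ.filter (fun i => ¬ i ≤ k), ev i = ∑ i ∈ P, ev i := by
        refine (Finset.sum_subset ?_ ?_).symm
        · intro i hi
          simp only [hP_def, Finset.mem_filter, Finset.mem_univ, true_and] at hi ⊢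
          exact not_le.mpr hi.1
        · intro i hi hni
          simp only [hP_def, Finset.mem_filter, Finset.mem_univ, true_and, not_and,
            not_lt] at hi hni
          exact hzero i (hni (not_le.mp hi))
      rw [hsum]
      calc ∑ i ∈ P, ev i ≤ ∑ i ∈ P, ev k := by
            refine Finset.sum_le_sum fun i hi => ?_
            simp only [hP_def, Finset.mem_filter, Finset.mem_univ, true_and] at hi
            exact hmono k i hi.1.le
        _ = (P.card : ℝ) * ev k := by rw [Finset.sum_const, nsmul_eq_mul]
        _ ≤ ((r : ℝ) - ((k : ℕ) + 1)) * ev k :=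
            mul_le_mul_of_nonneg_right hPcard (hevnn k)
    have hsplit : T = (∑ i ∈ Q, ev i) + ∑ i ∈ Finset.univ.filter (fun i => ¬ i ≤ k), ev i := by
      rw [hT_def, hQ_def, Finset.sum_filter_add_sum_filter_not]
    have hk1pos : (0 : ℝ) < (k : ℕ) + 1 := by positivity
    have hrk : (0 : ℝ) ≤ (r : ℝ) - ((k : ℕ) + 1) := by
      have : (k : ℕ) + 1 ≤ r := hk
      have := (Nat.cast_le (α := ℝ)).mpr this
      push_cast at this; linarith
    have hmain : (((k : ℕ) : ℝ) + 1) * T ≤ (r : ℝ) * ∑ i ∈ Q, ev i := by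
      calc (((k : ℕ) : ℝ) + 1) * T
          = (((k : ℕ) : ℝ) + 1) * (∑ i ∈ Q, ev i)
            + (((k : ℕ) : ℝ) + 1) * ∑ i ∈ Finset.univ.filter (fun i => ¬ i ≤ k), ev i := by
            rw [hsplit]; ring
        _ ≤ (((k : ℕ) : ℝ) + 1) * (∑ i ∈ Q, ev i)
            + (((k : ℕ) : ℝ) + 1) * (((r : ℝ) - ((k : ℕ) + 1)) * ev k) := by
            have := mul_le_mul_of_nonneg_left h3 hk1pos.le
            linarith
        _ ≤ (((k : ℕ) : ℝ) + 1) * (∑ i ∈ Q, ev i)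
            + ((r : ℝ) - ((k : ℕ) + 1)) * ∑ i ∈ Q, ev i := by
            have := mul_le_mul_of_nonneg_left h1 hrk
            nlinarith [mul_le_mul_of_nonneg_left h1 hrk]
        _ = (r : ℝ) * ∑ i ∈ Q, ev i := by ring
    -- combine
    have hak := ha k
    rw [div_mul_eq_mul_div, le_div_iff₀ hk1pos]
    calc a k * T * (((k : ℕ) : ℝ) + 1) = a k * ((((k : ℕ) : ℝ) + 1) * T) := by ring
      _ ≤ a k * ((r : ℝ) * ∑ i ∈ Q, ev i) := mul_le_mul_of_nonneg_left hmain hak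
      _ = (r : ℝ) * (a k * ∑ i ∈ Q, ev i) := by ring
      _ ≤ (r : ℝ) * S := mul_le_mul_of_nonneg_left h2 (by positivity)
  -- core chain
  set H : ℝ := ∑ m ∈ Finset.range r, (1 : ℝ) / (m + 1) with hH_def
  have core : ∑ j : Fin d, (ev j / (ev j + lam)) * a j ≤ H * ((r : ℝ) * S / T) := by
    have step1 : ∑ j : Fin d, (ev j / (ev j + lam)) * a j
        ≤ ∑ j : Fin d, (if (j : ℕ) < r then ((r : ℝ) / ((j : ℕ) + 1)) * S / T else 0) := by
      refine Finset.sum_le_sum fun j _ => ?_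
      by_cases hj : (j : ℕ) < r
      · rw [if_pos hj]
        have h1 : (ev j / (ev j + lam)) * a j ≤ a j := by
          have hden : 0 < ev j + lam := by have := hevnn j; linarith
          have : ev j / (ev j + lam) ≤ 1 := (div_le_one hden).mpr (by linarith)
          nlinarith [ha j]
        have h2 : a j ≤ ((r : ℝ) / ((j : ℕ) + 1)) * S / T := by
          rw [le_div_iff₀ hTpos]
          exact key j hj
        linarith
      · rw [if_neg hj, hzero j (not_lt.mp hj)]
        simp
    have step2 : ∑ j : Fin d, (if (j : ℕ) < r then ((r : ℝ) / ((j : ℕ) + 1)) * S / T else 0)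
        = ∑ m ∈ Finset.range r, ((r : ℝ) / ((m : ℕ) + 1)) * S / T := by
      rw [Fin.sum_univ_eq_sum_range (fun m => if m < r then ((r : ℝ) / ((m : ℕ) + 1)) * S / T else 0)]
      rw [← Finset.sum_subset (Finset.range_mono hrd)]
      · exact Finset.sum_congr rfl fun m hm => if_pos (Finset.mem_range.mp hm)
      · intro m _ hm
        rw [if_neg (by simpa using fun h => hm (Finset.mem_range.mpr h))]
    have step3 : ∑ m ∈ Finset.range r, ((r : ℝ) / ((m : ℕ) + 1)) * S / T
        = H * ((r : ℝ) * S / T) := by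
      rw [hH_def, Finset.sum_mul]
      refine Finset.sum_congr rfl fun m _ => ?_
      ring
    calc ∑ j : Fin d, (ev j / (ev j + lam)) * a j
        ≤ ∑ j : Fin d, (if (j : ℕ) < r then ((r : ℝ) / ((j : ℕ) + 1)) * S / T else 0) := step1
      _ = H * ((r : ℝ) * S / T) := by rw [step2, step3]
  have hHlog : H ≤ Real.log r + 1 := by
    have := harmonic_le_one_add_log r
    have hcast : (harmonic r : ℝ) = H := by
      rw [hH_def, harmonic]
      push_cast
      exact Finset.sum_congr rfl fun m _ => by rw [one_div]
    rw [hcast] at this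
    linarith
  constructor
  · rw [htr]
    calc lam * ∑ j, (ev j / (ev j + lam)) * a j
        ≤ lam * (H * ((r : ℝ) * S / T)) := mul_le_mul_of_nonneg_left core hlam.le
      _ = lam * ((r : ℝ) / T) * H * S := by field_simp
  · rw [htr]
    calc lam * ∑ j, (ev j / (ev j + lam)) * a j
        ≤ lam * (H * ((r : ℝ) * S / T)) := mul_le_mul_of_nonneg_left core hlam.le
      _ ≤ lam * ((Real.log r + 1) * ((r : ℝ) * S / T)) := by
          refine mul_le_mul_of_nonneg_left (mul_le_mul_of_nonneg_right hHlog ?_) hlam.le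
          positivity
      _ = lam * r * (Real.log r + 1) * S / T := by ring
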